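/- Let I ⊊ J be Ulrich ideals of R and α ∈ J. Then J = (α) + I if and only if J² = αJ. -/

import Mathlib

set_option synthInstance.maxHeartbeats 1000000
set_option maxHeartbeats 2000000
set_option linter.unnecessarySimpa false

open IsLocalRing Pointwise

section Defs
variable (R : Type*) [CommRing R]

/-- minimal number of generators of a submodule -/
noncomputable def mu {M : Type*} [AddCommGroup M] [Module R M] (N : Submodule R M) : ℕ :=
  sInf {n | ∃ s : Finset M, s.card = n ∧ Submodule.span R (↑s : Set M) = N}

/-- length of a module, as the Krull dimension of its lattice of submodules -/
noncomputable def rlength (M : Type*) [AddCommGroup M] [Module R M] : WithBot ℕ∞ :=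
  Order.krullDim (Submodule R M)

variable (K : Type*) [CommRing K] [Algebra R K]

/-- the image of an ideal in the total ring of fractions `K` -/
noncomputable def toK (I : Ideal R) : Submodule R K :=
  Submodule.map (Algebra.linearMap R K) I

/-- colon of submodules of the total quotient ring: `X : Y = {z | zY ⊆ X}` -/
def qcolon (X Y : Submodule R K) : Submodule R K where
  carrier := {z | ∀ y ∈ Y, z * y ∈ X}
  add_mem' := by
    intro a b ha hb y hy
    simpa [add_mul] using X.add_mem (ha y hy) (hb y hy)
  zero_mem' := by
    intro y hy; simpa using X.zero_mem
  smul_mem' := by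
    intro c a ha y hy
    simpa [smul_mul_assoc] using X.smul_mem c (ha y hy)

/-- `I : I`, viewed as a subalgebra (a birational extension of `R`) of the total
ring of fractions `K`. -/
noncomputable def endAlg (I : Ideal R) : Subalgebra R K where
  carrier := {z | ∀ y ∈ toK R K I, z * y ∈ toK R K I}
  mul_mem' := by
    intro a b ha hb y hy
    rw [mul_assoc]; exact ha _ (hb y hy)
  add_mem' := by
    intro a b ha hb y hy
    simpa [add_mul] using (toK R K I).add_mem (ha y hy) (hb y hy)
  one_mem' := by intro y hy; simpa using hy
  zero_mem' := by intro y hy; simpa using (toK R K I).zero_mem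
  algebraMap_mem' := by
    intro r y hy
    simpa [Algebra.smul_def] using (toK R K I).smul_mem r hy

/-- the socle `{x | m x = 0}` of a module over a local ring (`(⊥).jacobson` is
the maximal ideal of a local ring) -/
def socle (M : Type*) [AddCommGroup M] [Module R M] : Submodule R M where
  carrier := {x | ∀ c ∈ (⊥ : Ideal R).jacobson, c • x = 0}
  add_mem' := by
    intro a b ha hb c hc; rw [smul_add, ha c hc, hb c hc, add_zero]
  zero_mem' := by intro c hc; simp
  smul_mem' := by
    intro r x hx c hc; rw [smul_comm, hx c hc, smul_zero]

/-- `R` has multiplicity `e`: the Hilbert function of the maximal ideal has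
eventual first difference `e`.  (This is the multiplicity of a one-dimensional
Cohen-Macaulay local ring.) -/
noncomputable def HasMult (e : ℕ) : Prop :=
  ∀ᶠ n in Filter.atTop,
    rlength R (R ⧸ ((⊥ : Ideal R).jacobson ^ (n + 1))) =
      rlength R (R ⧸ ((⊥ : Ideal R).jacobson ^ n)) + (e : WithBot ℕ∞)

/-- `R` has Cohen-Macaulay type `r`: for every parameter (a nonzerodivisor in
the maximal ideal), the socle of `R/(a)` has length `r`. -/
noncomputable def HasCMType (r : ℕ) : Prop :=
  ∀ a : R, a ∈ (⊥ : Ideal R).jacobson → a ∈ nonZeroDivisors R →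
    rlength (R ⧸ Ideal.span {a}) (socle (R ⧸ Ideal.span {a}) (R ⧸ Ideal.span {a}))
      = (r : WithBot ℕ∞)

/-- an Artinian local ring is Gorenstein iff its socle is simple -/
noncomputable def IsArtinianGorensteinLocal : Prop :=
  IsArtinianRing R ∧ IsLocalRing R ∧ rlength R (socle R R) = (1 : WithBot ℕ∞)

/-- a one-dimensional Cohen-Macaulay (Noetherian) local ring: local Noetherian
of Krull dimension one with positive depth -/
class IsOneDimCMLocal : Prop where
  noeth : IsNoetherianRing R
  local_ : IsLocalRing R
  dim_one : ringKrullDim R = 1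
  depth_pos : ∃ a : R, a ∈ (⊥ : Ideal R).jacobson ∧ a ∈ nonZeroDivisors R

/-- Ulrich ideal: an `m`-primary ideal with a principal reduction `Q ⊊ I`,
`I² = QI`, and `I/I²` free over `R/I`. -/
def IsUlrich (I : Ideal R) : Prop :=
  I.radical = (⊥ : Ideal R).jacobson ∧ I ≠ ⊤ ∧
  ∃ a ∈ I, Ideal.span {a} ≠ I ∧ I ^ 2 = Ideal.span {a} * I ∧
    Module.Free (R ⧸ I) I.Cotangent

/-- Condition (C) for an `m`-primary ideal `I`, with the number `t`:
`A/R ≅ (R/I)^t` with `t > 0` and `A = R : I`, where `A = I : I`. -/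
def ConditionC (I : Ideal R) (t : ℕ) : Prop :=
  I.radical = (⊥ : Ideal R).jacobson ∧ I ≠ ⊤ ∧ 0 < t ∧
  Nonempty (((qcolon R K (toK R K I) (toK R K I)) ⧸
      (Submodule.comap (qcolon R K (toK R K I) (toK R K I)).subtype (toK R K (⊤ : Ideal R))))
    ≃ₗ[R] (Fin t → R ⧸ I)) ∧
  qcolon R K (toK R K I) (toK R K I) = qcolon R K (toK R K (⊤ : Ideal R)) (toK R K I)

end Defs
section UlrichAux

open Ideal

variable {R : Type*} [CommRing R]

private lemma nzd_cancel {q x y : R} (hq : q ∈ nonZeroDivisors R) (h : q * x = q * y) :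
    x = y := by
  have h' : (x - y) * q = 0 := by linear_combination h
  exact sub_eq_zero.mp (mem_nonZeroDivisors_iff_right.mp hq _ h')

private lemma mk_smul_cot {I : Ideal R} (r : R) (v : I.Cotangent) :
    Ideal.Quotient.mk I r • v = r • v := rfl

private lemma quot_local [IsLocalRing R] {I : Ideal R} (hItop : I ≠ ⊤) :
    IsLocalRing (R ⧸ I) := by
  haveI := Ideal.Quotient.nontrivial_iff.mpr hItop
  exact IsLocalRing.of_surjective' (Ideal.Quotient.mk I) Ideal.Quotient.mk_surjective

/-- lift an element of `𝔪' • ⊤ ⊆ I.Cotangent` to an element of `𝔪 * I`. -/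
private lemma smul_top_lift [IsLocalRing R] {I : Ideal R} [IsLocalRing (R ⧸ I)] (w : I.Cotangent)
    (hw : w ∈ (IsLocalRing.maximalIdeal (R ⧸ I)) • (⊤ : Submodule (R ⧸ I) I.Cotangent)) :
    ∃ u, u ∈ (IsLocalRing.maximalIdeal R) * I ∧ ∃ hu : u ∈ I, I.toCotangent ⟨u, hu⟩ = w := by
  refine Submodule.smul_induction_on hw ?_ ?_
  · intro c hc x _
    obtain ⟨x, rfl⟩ := I.toCotangent_surjective x
    obtain ⟨r, rfl⟩ := Ideal.Quotient.mk_surjective c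
    have hrm : r ∈ IsLocalRing.maximalIdeal R := by
      rw [IsLocalRing.mem_maximalIdeal, mem_nonunits_iff]
      intro hr
      exact ((IsLocalRing.mem_maximalIdeal _).mp hc) (hr.map (Ideal.Quotient.mk I))
    refine ⟨r * (x : R), Ideal.mul_mem_mul hrm x.2, I.mul_mem_left r x.2, ?_⟩
    have hx : (⟨r * (x : R), I.mul_mem_left r x.2⟩ : I) = r • x := by
      ext; simp
    rw [hx, map_smul, mk_smul_cot]
  · rintro x y ⟨u, hu1, hu2, rfl⟩ ⟨u', hu1', hu2', rfl⟩
    refine ⟨u + u', add_mem hu1 hu1', add_mem hu2 hu2', ?_⟩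
    rw [← map_add]; rfl

private lemma exists_unit_coord [IsNoetherianRing R] [IsLocalRing R]
    {I : Ideal R} [IsLocalRing (R ⧸ I)] (hItop : I ≠ ⊤) {a : R} (haI : a ∈ I)
    (hsq : I ^ 2 = Ideal.span {a} * I) (ha0 : a ∈ nonZeroDivisors R)
    {ι : Type*} (b : Module.Basis ι (R ⧸ I) I.Cotangent) :
    ∃ i₀, IsUnit (b.repr (I.toCotangent ⟨a, haI⟩) i₀) := by
  by_contra hcon
  push_neg at hcon
  set v := I.toCotangent ⟨a, haI⟩ with hv
  have hvmem : v ∈ (IsLocalRing.maximalIdeal (R ⧸ I)) • (⊤ : Submodule (R ⧸ I) I.Cotangent) := by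
    have hsum : (b.repr v).sum (fun i c => c • b i) ∈
        (IsLocalRing.maximalIdeal (R ⧸ I)) • (⊤ : Submodule (R ⧸ I) I.Cotangent) := by
      refine Submodule.sum_mem _ fun i _ => Submodule.smul_mem_smul ?_ trivial
      rw [IsLocalRing.mem_maximalIdeal, mem_nonunits_iff]
      exact hcon i
    rwa [← Finsupp.linearCombination_apply, b.linearCombination_repr] at hsum
  obtain ⟨u, huMI, huI, hueq⟩ := smul_top_lift v hvmem
  have hau : a - u ∈ I ^ 2 := by
    have h2 : I.toCotangent (⟨a, haI⟩ : I) = I.toCotangent ⟨u, huI⟩ := (hueq.trans hv).symm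
    exact (Ideal.toCotangent_eq I).mp h2
  have haspan2 : Ideal.span {a} ≤ IsLocalRing.maximalIdeal R * I ⊔ I ^ 2 := by
    rw [Ideal.span_le, Set.singleton_subset_iff]
    have h : a = u + (a - u) := by ring
    rw [h]
    exact Submodule.add_mem _ (Ideal.mem_sup_left huMI) (Ideal.mem_sup_right hau)
  have hI2 : (I ^ 2 : Ideal R) ≤ (IsLocalRing.maximalIdeal R) • (I ^ 2 : Ideal R) := by
    rw [Ideal.smul_eq_mul]
    calc (I ^ 2 : Ideal R) = Ideal.span {a} * I := hsq
      _ ≤ (IsLocalRing.maximalIdeal R * I ⊔ I ^ 2) * I := Ideal.mul_mono_left haspan2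
      _ = IsLocalRing.maximalIdeal R * I * I ⊔ I ^ 2 * I := Ideal.sup_mul _ _ _
      _ ≤ IsLocalRing.maximalIdeal R * I ^ 2 := by
          apply sup_le
          · rw [mul_assoc, ← pow_two]
          · calc (I ^ 2 : Ideal R) * I = I * I ^ 2 := mul_comm _ _
              _ ≤ IsLocalRing.maximalIdeal R * I ^ 2 :=
                  Ideal.mul_mono_left (IsLocalRing.le_maximalIdeal hItop)
  have hbot := Submodule.eq_bot_of_le_smul_of_le_jacobson_bot (IsLocalRing.maximalIdeal R)
    ((I ^ 2 : Ideal R) : Submodule R R) (IsNoetherian.noetherian _) hI2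
    (IsLocalRing.jacobson_eq_maximalIdeal ⊥ bot_ne_top).ge
  have ha2 : a * a = 0 := by
    have hmem : a * a ∈ (I ^ 2 : Ideal R) := by
      rw [pow_two]; exact Ideal.mul_mem_mul haI haI
    rw [hbot] at hmem
    simpa using hmem
  have ha' : a = 0 := mem_nonZeroDivisors_iff_right.mp ha0 _ ha2
  rw [ha'] at ha0
  exact one_ne_zero (mem_nonZeroDivisors_iff_right.mp ha0 1 (by simp))

private lemma mem_of_mul_I_le_span [IsNoetherianRing R] [IsLocalRing R]
    {I : Ideal R} [IsLocalRing (R ⧸ I)] (hItop : I ≠ ⊤) {a : R} (haI : a ∈ I)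
    (hsq : I ^ 2 = Ideal.span {a} * I) (haspan : Ideal.span {a} ≠ I)
    (ha0 : a ∈ nonZeroDivisors R) (hfree : Module.Free (R ⧸ I) I.Cotangent)
    {y : R} (hy : ∀ i ∈ I, y * i ∈ Ideal.span {a}) : y ∈ I := by
  haveI := hfree
  set b := Module.Free.chooseBasis (R ⧸ I) I.Cotangent with hb
  obtain ⟨i₀, hi₀⟩ := exists_unit_coord hItop haI hsq ha0 b
  set aM := I.toCotangent ⟨a, haI⟩ with haM
  by_cases hex : ∃ j, j ≠ i₀
  · obtain ⟨j, hj⟩ := hex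
    obtain ⟨ij, hij⟩ := I.toCotangent_surjective (b j)
    obtain ⟨c, hc⟩ := Ideal.mem_span_singleton'.mp (hy ij ij.2)
    have key : (Ideal.Quotient.mk I y) • b j = (Ideal.Quotient.mk I c) • aM := by
      rw [← hij, mk_smul_cot, mk_smul_cot, ← map_smul, ← map_smul]
      congr 1
      ext
      show y * (ij : R) = c * a
      exact hc.symm
    have h1 := congrArg (fun w => b.repr w i₀) key
    have h2 := congrArg (fun w => b.repr w j) key
    simp only [map_smul, Finsupp.smul_apply, Module.Basis.repr_self, smul_eq_mul] at h1 h2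
    rw [Finsupp.single_apply, if_neg hj, mul_zero] at h1
    rw [Finsupp.single_apply, if_pos rfl] at h2
    have hc0 : Ideal.Quotient.mk I c = 0 := (hi₀.mul_left_eq_zero).mp h1.symm
    have hy0 : Ideal.Quotient.mk I y = 0 := by
      rw [mul_one] at h2
      rw [h2, hc0, zero_mul]
    exact Ideal.Quotient.eq_zero_iff_mem.mp hy0
  · push_neg at hex
    exfalso
    apply haspan
    refine le_antisymm (Ideal.span_le.mpr (Set.singleton_subset_iff.mpr haI)) ?_
    intro x hx
    haveI : Unique (Module.Free.ChooseBasisIndex (R ⧸ I) I.Cotangent) := ⟨⟨i₀⟩, hex⟩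
    have hrep : ∀ w : I.Cotangent, w = (b.repr w i₀) • b i₀ := by
      intro w
      have h1 : b.repr w = Finsupp.single i₀ (b.repr w i₀) := by
        refine Finsupp.ext fun k => ?_
        rw [hex k]
        simp
      conv_lhs => rw [← b.repr.symm_apply_apply w, h1, Module.Basis.repr_symm_single]
    obtain ⟨u, hu⟩ := hi₀
    set w := I.toCotangent ⟨x, hx⟩ with hw
    have hbio : b i₀ = ((u⁻¹ : (R ⧸ I)ˣ) : R ⧸ I) • aM := by
      rw [hrep aM, ← hu, ← smul_assoc, smul_eq_mul, Units.inv_mul, one_smul]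
    have hwrep : w = ((b.repr w i₀) * ((u⁻¹ : (R ⧸ I)ˣ) : R ⧸ I)) • aM := by
      rw [mul_smul, ← hbio]
      exact hrep w
    obtain ⟨d, hd⟩ := Ideal.Quotient.mk_surjective ((b.repr w i₀) * ((u⁻¹ : (R ⧸ I)ˣ) : R ⧸ I))
    have hwd : w = I.toCotangent ⟨d * a, I.mul_mem_left d haI⟩ := by
      have hsub : (d • (⟨a, haI⟩ : I)) = (⟨d * a, I.mul_mem_left d haI⟩ : I) := by
        ext; simp
      rw [hwrep, ← hd, mk_smul_cot, ← map_smul, hsub]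
    have hxd : x - d * a ∈ I ^ 2 := (Ideal.toCotangent_eq I).mp (hw ▸ hwd)
    have hI2span : (I ^ 2 : Ideal R) ≤ Ideal.span {a} := by
      rw [hsq]; exact Ideal.mul_le_left
    have : x = (x - d * a) + d * a := by ring
    rw [this]
    exact Submodule.add_mem _ (hI2span hxd) (Ideal.mem_span_singleton'.mpr ⟨d, rfl⟩)

private lemma ulrich_fact3 [IsNoetherianRing R] [IsLocalRing R]
    {I : Ideal R} [IsLocalRing (R ⧸ I)] (hItop : I ≠ ⊤) {a : R} (haI : a ∈ I)
    (hsq : I ^ 2 = Ideal.span {a} * I) (haspan : Ideal.span {a} ≠ I)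
    (ha0 : a ∈ nonZeroDivisors R) (hfree : Module.Free (R ⧸ I) I.Cotangent)
    {J : Ideal R} (hIJ : I ≤ J) {π : R} (hπ0 : π ∈ nonZeroDivisors R)
    (hJsq : J ^ 2 = Ideal.span {π} * J) :
    ∀ j ∈ J, ∀ i ∈ I, ∃ z ∈ I, π * z = j * i := by
  have hAll : ∀ u ∈ J, ∀ v ∈ J, ∃ y ∈ J, π * y = u * v := by
    intro u hu v hv
    have huv : u * v ∈ Ideal.span {π} * J := by
      rw [← hJsq, pow_two]; exact Ideal.mul_mem_mul hu hv
    exact Ideal.mem_span_singleton_mul.mp huv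
  intro j hj i hi
  obtain ⟨y, hyJ, hy⟩ := hAll j hj i (hIJ hi)
  refine ⟨y, ?_, hy⟩
  refine mem_of_mul_I_le_span hItop haI hsq haspan ha0 hfree ?_
  intro i' hi'
  have hii' : i * i' ∈ Ideal.span {a} * I := by
    rw [← hsq, pow_two]; exact Ideal.mul_mem_mul hi hi'
  obtain ⟨d, hd, hda⟩ := Ideal.mem_span_singleton_mul.mp hii'
  obtain ⟨e, heJ, he⟩ := hAll j hj d (hIJ hd)
  have hkey : π * (y * i') = π * (a * e) := by
    linear_combination i' * hy - j * hda - a * he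
  have : y * i' = a * e := nzd_cancel hπ0 hkey
  exact Ideal.mem_span_singleton'.mpr ⟨e, by rw [mul_comm]; exact this.symm⟩

private lemma ulrich_fact1 [IsNoetherianRing R] [IsLocalRing R]
    {I : Ideal R} [IsLocalRing (R ⧸ I)] (hItop : I ≠ ⊤) {a : R} (haI : a ∈ I)
    (hsq : I ^ 2 = Ideal.span {a} * I) (haspan : Ideal.span {a} ≠ I)
    (ha0 : a ∈ nonZeroDivisors R) (hfree : Module.Free (R ⧸ I) I.Cotangent)
    {J : Ideal R} (hIJ : I ≤ J) {π : R} (hπ0 : π ∈ nonZeroDivisors R)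
    (hJsq : J ^ 2 = Ideal.span {π} * J) :
    J ≤ Ideal.span {π} ⊔ I := by
  intro x hx
  obtain ⟨z, hzI, hz⟩ := ulrich_fact3 hItop haI hsq haspan ha0 hfree hIJ hπ0 hJsq x hx a haI
  haveI := hfree
  set b := Module.Free.chooseBasis (R ⧸ I) I.Cotangent with hb
  obtain ⟨i₀, hi₀⟩ := exists_unit_coord hItop haI hsq ha0 b
  have key : (Ideal.Quotient.mk I π) • I.toCotangent ⟨z, hzI⟩
      = (Ideal.Quotient.mk I x) • I.toCotangent ⟨a, haI⟩ := by
    rw [mk_smul_cot, mk_smul_cot, ← map_smul, ← map_smul]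
    congr 1
    ext
    show π * z = x * a
    exact hz
  have h1 := congrArg (fun w => b.repr w i₀) key
  simp only [map_smul, Finsupp.smul_apply, smul_eq_mul] at h1
  obtain ⟨u, hu⟩ := hi₀
  have hx' : Ideal.Quotient.mk I x
      = Ideal.Quotient.mk I π * (b.repr (I.toCotangent ⟨z, hzI⟩) i₀ * ((u⁻¹ : (R ⧸ I)ˣ) : R ⧸ I)) := by
    have h2 := congrArg (fun t => t * ((u⁻¹ : (R ⧸ I)ˣ) : R ⧸ I)) h1
    rw [mul_assoc, mul_assoc] at h2
    rw [← hu, Units.mul_inv, mul_one] at h2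
    exact h2.symm
  obtain ⟨c, hc⟩ := Ideal.Quotient.mk_surjective
    (b.repr (I.toCotangent ⟨z, hzI⟩) i₀ * ((u⁻¹ : (R ⧸ I)ˣ) : R ⧸ I))
  have hxc : x - π * c ∈ I := by
    rw [← Ideal.Quotient.eq_zero_iff_mem, map_sub, _root_.map_mul, hc, ← hx', sub_self]
  have hxx : x = π * c + (x - π * c) := by ring
  rw [hxx]
  exact Submodule.add_mem _
    (Ideal.mem_sup_left (Ideal.mem_span_singleton'.mpr ⟨c, mul_comm c π⟩))
    (Ideal.mem_sup_right hxc)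

private lemma ulrich_forward [IsNoetherianRing R] [IsLocalRing R]
    {I : Ideal R} [IsLocalRing (R ⧸ I)] (hItop : I ≠ ⊤) {a : R} (haI : a ∈ I)
    (hsq : I ^ 2 = Ideal.span {a} * I) (haspan : Ideal.span {a} ≠ I)
    (ha0 : a ∈ nonZeroDivisors R) (hfree : Module.Free (R ⧸ I) I.Cotangent)
    (hIrad : I.radical = (⊥ : Ideal R).jacobson)
    {J : Ideal R} (hIJ : I < J) {q : R} (hqJ : q ∈ J) (hq0 : q ∈ nonZeroDivisors R)
    (hJsq : J ^ 2 = Ideal.span {q} * J)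
    {α : R} (hα : α ∈ J) (hJeq : J = Ideal.span {α} ⊔ I) :
    J ^ 2 = Ideal.span {α} * J := by
  have hIJle : I ≤ J := le_of_lt hIJ
  have hF1 : J ≤ Ideal.span {q} ⊔ I :=
    ulrich_fact1 hItop haI hsq haspan ha0 hfree hIJle hq0 hJsq
  have hqnotI : q ∉ I := by
    intro hqI
    have hJI : J ≤ I := hF1.trans
      (sup_le (Ideal.span_le.mpr (Set.singleton_subset_iff.mpr hqI)) le_rfl)
    exact hIJ.ne (le_antisymm hIJle hJI)
  have hqmem : q ∈ Ideal.span {α} ⊔ I := hJeq ▸ hqJ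
  obtain ⟨u', hu', x₀, hx₀, huv⟩ := Submodule.mem_sup.mp hqmem
  obtain ⟨r₀, hr₀⟩ := Ideal.mem_span_singleton'.mp hu'
  have hq_eq : q = r₀ * α + x₀ := by rw [← huv, ← hr₀]
  have hjac : IsLocalRing.maximalIdeal R ≤ (⊥ : Ideal R).jacobson :=
    (IsLocalRing.jacobson_eq_maximalIdeal ⊥ bot_ne_top).ge
  -- the division-by-q function f, with q * f y = x₀ * y for y ∈ J
  have hstep : ∀ y, y ∈ J → ∃ w, w ∈ I ∧ q * w = x₀ * y := by
    intro y hy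
    obtain ⟨w, hwI, hw⟩ :=
      ulrich_fact3 hItop haI hsq haspan ha0 hfree hIJle hq0 hJsq y hy x₀ hx₀
    exact ⟨w, hwI, by rw [hw, mul_comm]⟩
  choose! f hfI hfq using hstep
  have hcancel : ∀ {s t : R}, q * s = q * t → s = t := fun h => nzd_cancel hq0 h
  have hfadd : ∀ i i', i ∈ I → i' ∈ I → f (i + i') = f i + f i' := by
    intro i i' hi hi'
    refine hcancel ?_
    rw [hfq _ (hIJle (add_mem hi hi')), mul_add, mul_add,
      hfq _ (hIJle hi), hfq _ (hIJle hi')]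
  have hfsmul : ∀ (c i : R), i ∈ I → f (c * i) = c * f i := by
    intro c i hi
    refine hcancel ?_
    rw [hfq _ (hIJle (I.mul_mem_left c hi)), mul_left_comm,
      mul_left_comm q c (f i), hfq _ (hIJle hi)]
  let g₀ : I →ₗ[R] I :=
    { toFun := fun i => ⟨f i, hfI i (hIJle i.2)⟩
      map_add' := fun i i' => Subtype.ext (hfadd i i' i.2 i'.2)
      map_smul' := fun c i => Subtype.ext (by simpa [smul_eq_mul] using hfsmul c i i.2) }
  have hg₀ : ∀ i : I, (g₀ i : R) = f i := fun _ => rfl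
  have hstab : (I • ⊤ : Submodule R I) ≤ (I • ⊤ : Submodule R I).comap g₀ := by
    rw [← Submodule.map_le_iff_le_comap, Submodule.map_smul'']
    exact Submodule.smul_mono le_rfl le_top
  let G : Module.End R I.Cotangent := Submodule.mapQ _ _ g₀ hstab
  have hGapp : ∀ i : I, G (I.toCotangent i) = I.toCotangent (g₀ i) :=
    fun i => rfl
  haveI := hfree
  set Mb := Module.Free.chooseBasis (R ⧸ I) I.Cotangent with hMb
  have hclaim1 : ∀ v : I.Cotangent,
      G v ∈ (IsLocalRing.maximalIdeal R) • (⊤ : Submodule R I.Cotangent) := by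
    intro v
    obtain ⟨i, rfl⟩ := I.toCotangent_surjective v
    rw [hGapp i]
    set w := I.toCotangent (g₀ i) with hwdef
    have hqw : (Ideal.Quotient.mk I q) • w = 0 := by
      rw [mk_smul_cot, ← map_smul, Ideal.toCotangent_eq_zero]
      show ((q • (g₀ i) : I) : R) ∈ I ^ 2
      have h1 : ((q • (g₀ i) : I) : R) = x₀ * (i : R) := by
        rw [SetLike.val_smul, smul_eq_mul, hg₀, hfq _ (hIJle i.2)]
      rw [h1, pow_two]
      exact Ideal.mul_mem_mul hx₀ i.2
    have hco : ∀ k, ¬ IsUnit (Mb.repr w k) := by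
      intro k hk
      have h0 : (Ideal.Quotient.mk I q) * (Mb.repr w k) = 0 := by
        have h2 := congrArg (fun t => Mb.repr t k) hqw
        simpa only [map_smul, Finsupp.smul_apply, smul_eq_mul, map_zero,
          Finsupp.coe_zero, Pi.zero_apply] using h2
      have hqz : Ideal.Quotient.mk I q = 0 := (hk.mul_left_eq_zero).mp h0
      exact hqnotI (Ideal.Quotient.eq_zero_iff_mem.mp hqz)
    have hsum : (Mb.repr w).sum (fun k c => c • Mb k) ∈
        (IsLocalRing.maximalIdeal R) • (⊤ : Submodule R I.Cotangent) := by
      refine Submodule.sum_mem _ fun k _ => ?_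
      dsimp only
      obtain ⟨m, hm⟩ := Ideal.Quotient.mk_surjective (Mb.repr w k)
      have hmm : m ∈ IsLocalRing.maximalIdeal R := by
        rw [IsLocalRing.mem_maximalIdeal, mem_nonunits_iff]
        intro hmu
        exact hco k (hm ▸ hmu.map (Ideal.Quotient.mk I))
      rw [← hm, mk_smul_cot]
      exact Submodule.smul_mem_smul hmm trivial
    rwa [← Finsupp.linearCombination_apply, Mb.linearCombination_repr] at hsum
  have hclaim2 : ∀ t : ℕ, ∀ v : I.Cotangent,
      (G ^ t) v ∈ ((IsLocalRing.maximalIdeal R) ^ t) • (⊤ : Submodule R I.Cotangent) := by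
    intro t
    induction t with
    | zero =>
      intro v
      rw [pow_zero, Ideal.one_eq_top, Submodule.top_smul]
      exact Submodule.mem_top
    | succ t ih =>
      intro v
      have h1 : (G ^ (t + 1)) v = (G ^ t) (G v) := by
        rw [pow_succ]; rfl
      have h2 : (G ^ t) (G v) ∈ Submodule.map (G ^ t)
          ((IsLocalRing.maximalIdeal R) • (⊤ : Submodule R I.Cotangent)) :=
        Submodule.mem_map_of_mem (hclaim1 v)
      rw [Submodule.map_smul''] at h2
      have h3 : Submodule.map (G ^ t) (⊤ : Submodule R I.Cotangent)
          ≤ ((IsLocalRing.maximalIdeal R) ^ t) • ⊤ := by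
        rintro _ ⟨x, -, rfl⟩
        exact ih x
      have h4 := Submodule.smul_mono (le_refl (IsLocalRing.maximalIdeal R)) h3 h2
      rw [h1]
      rwa [← Submodule.smul_assoc, Ideal.smul_eq_mul, ← pow_succ'] at h4
  obtain ⟨N, hN⟩ := Ideal.exists_radical_pow_le_of_fg I (IsNoetherian.noetherian _)
  have hmrad : IsLocalRing.maximalIdeal R = I.radical := by
    rw [hIrad, IsLocalRing.jacobson_eq_maximalIdeal ⊥ bot_ne_top]
  have hmN : (IsLocalRing.maximalIdeal R) ^ N ≤ I := by rw [hmrad]; exact hN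
  have hbot : ((IsLocalRing.maximalIdeal R) ^ N) • (⊤ : Submodule R I.Cotangent)
      ≤ ⊥ := by
    intro w hw
    refine Submodule.smul_induction_on hw ?_ ?_
    · intro r hr x _
      rw [Submodule.mem_bot]
      exact Ideal.Cotangent.smul_eq_zero_of_mem (hmN hr) x
    · intro x y hx hy
      rw [Submodule.mem_bot] at *
      rw [hx, hy, add_zero]
  set N₁ : Ideal R := Ideal.span {w | ∃ y ∈ J, ∃ v ∈ I, q * v = x₀ * y ∧ w = y - v}
    with hN₁def
  have hJle : J ≤ N₁ ⊔ (IsLocalRing.maximalIdeal R) • J := by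
    intro x hx
    set Y : ℕ → R := fun t => f^[t] x with hYdef
    have hY0 : Y 0 = x := rfl
    have hYsucc : ∀ t, Y (t + 1) = f (Y t) := fun t => Function.iterate_succ_apply' f t x
    have hYJ : ∀ t, Y t ∈ J := by
      intro t
      induction t with
      | zero => exact hx
      | succ t ih =>
        rw [hYsucc t]
        exact hIJle (hfI _ ih)
    have hYI : ∀ t, Y (t + 1) ∈ I := fun t => by rw [hYsucc t]; exact hfI _ (hYJ t)
    have hcot : ∀ t, I.toCotangent ⟨Y (t + 1), hYI t⟩
        = (G ^ t) (I.toCotangent ⟨Y 1, hYI 0⟩) := by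
      intro t
      induction t with
      | zero => rw [pow_zero]; rfl
      | succ t ih =>
        have hsub : (⟨Y (t + 1 + 1), hYI (t + 1)⟩ : I) = g₀ ⟨Y (t + 1), hYI t⟩ := by
          ext
          show Y (t + 2) = f (Y (t + 1))
          exact hYsucc (t + 1)
        rw [hsub, ← hGapp, ih, ← Module.End.mul_apply, ← pow_succ']
    have hYfin : Y (N + 1) ∈ I ^ 2 := by
      have h0 : I.toCotangent ⟨Y (N + 1), hYI N⟩ = 0 := by
        rw [hcot N]
        have hz := hbot (hclaim2 N (I.toCotangent ⟨Y 1, hYI 0⟩))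
        simpa using hz
      exact (Ideal.toCotangent_eq_zero I ⟨Y (N + 1), hYI N⟩).mp h0
    have hx_eq : x = (∑ t ∈ Finset.range (N + 1), (Y t - Y (t + 1))) + Y (N + 1) := by
      rw [Finset.sum_range_sub' Y, hY0]
      ring
    rw [hx_eq]
    refine Submodule.add_mem _
      (Ideal.mem_sup_left (Submodule.sum_mem _ fun t _ => ?_))
      (Ideal.mem_sup_right ?_)
    · refine Submodule.subset_span ⟨Y t, hYJ t, Y (t + 1), hYI t, ?_, rfl⟩
      rw [hYsucc t]
      exact hfq _ (hYJ t)
    · have h2 : (I ^ 2 : Ideal R) ≤ (IsLocalRing.maximalIdeal R) * J := by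
        rw [hsq]
        exact Ideal.mul_mono
          (Ideal.span_le.mpr (Set.singleton_subset_iff.mpr
            (IsLocalRing.le_maximalIdeal hItop haI))) hIJle
      rw [Ideal.smul_eq_mul]
      exact h2 hYfin
  have hJN₁ : J ≤ N₁ :=
    Submodule.le_of_le_smul_of_le_jacobson_bot (IsNoetherian.noetherian J) hjac hJle
  refine le_antisymm ?_ ?_
  · rw [hJsq, Ideal.mul_le]
    intro r hr s hs
    obtain ⟨cr, hcr⟩ := Ideal.mem_span_singleton'.mp hr
    have hqs : ∀ s, s ∈ N₁ → q * s ∈ Ideal.span {α} * J := by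
      intro s hsmem
      induction hsmem using Submodule.span_induction with
      | mem w hw =>
        obtain ⟨y, hy, v, hvI, hqv, rfl⟩ := hw
        have hkey : q * (y - v) = α * (r₀ * y) := by
          linear_combination y * hq_eq - hqv
        rw [hkey]
        exact Ideal.mul_mem_mul (Ideal.mem_span_singleton_self α) (J.mul_mem_left r₀ hy)
      | zero =>
        rw [mul_zero]
        exact Submodule.zero_mem _
      | add w w' hw hw' ihw ihw' =>
        rw [mul_add]
        exact Submodule.add_mem _ ihw ihw'
      | smul c w hw ihw =>
        rw [smul_eq_mul, mul_left_comm]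
        exact Ideal.mul_mem_left _ c ihw
    rw [← hcr, mul_assoc]
    exact Ideal.mul_mem_left _ cr (hqs s (hJN₁ hs))
  · calc Ideal.span {α} * J ≤ J * J :=
        Ideal.mul_mono (Ideal.span_le.mpr (Set.singleton_subset_iff.mpr hα)) le_rfl
      _ = J ^ 2 := (pow_two J).symm

end UlrichAux

theorem stmt16 (R : Type*) [CommRing R] [IsOneDimCMLocal R]
    (K : Type*) [CommRing K] [Algebra R K] [IsFractionRing R K]
    (I J : Ideal R) (hI : IsUlrich R I) (hJ : IsUlrich R J) (hIJ : I < J)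
    (α : R) (hα : α ∈ J) :
    J = Ideal.span {α} ⊔ I ↔ J ^ 2 = Ideal.span {α} * J := by
  haveI : IsNoetherianRing R := IsOneDimCMLocal.noeth
  haveI : IsLocalRing R := IsOneDimCMLocal.local_
  obtain ⟨hIrad, hItop, a, haI, haspan, hIsq, hIfree⟩ := hI
  obtain ⟨hJrad, hJtop, q, hqJ, hqspan, hJsq, hJfree⟩ := hJ
  haveI : IsLocalRing (R ⧸ I) := quot_local hItop
  obtain ⟨z, hzm, hz0⟩ := IsOneDimCMLocal.depth_pos (R := R)
  have nzd_of_red : ∀ (W : Ideal R) (π : R), W.radical = (⊥ : Ideal R).jacobson →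
      W ^ 2 = Ideal.span {π} * W → π ∈ nonZeroDivisors R := by
    intro W π hWrad hWsq
    have hzW : z ∈ W.radical := by rw [hWrad]; exact hzm
    obtain ⟨n, hn⟩ := Ideal.mem_radical_iff.mp hzW
    have h2 : z ^ n * z ^ n ∈ Ideal.span {π} := by
      have hmem : z ^ n * z ^ n ∈ W ^ 2 := by
        rw [pow_two]; exact Ideal.mul_mem_mul hn hn
      rw [hWsq] at hmem
      exact Ideal.mul_le_left hmem
    obtain ⟨c, hc⟩ := Ideal.mem_span_singleton'.mp h2
    have hznzd : z ^ n * z ^ n ∈ nonZeroDivisors R :=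
      mul_mem (pow_mem hz0 n) (pow_mem hz0 n)
    rw [mem_nonZeroDivisors_iff_right]
    intro x hx
    refine mem_nonZeroDivisors_iff_right.mp hznzd x ?_
    rw [← hc]
    linear_combination c * hx
  have ha0 := nzd_of_red I a hIrad hIsq
  have hq0 := nzd_of_red J q hJrad hJsq
  constructor
  · intro hJeq
    exact ulrich_forward hItop haI hIsq haspan ha0 hIfree hIrad hIJ hqJ hq0 hJsq hα hJeq
  · intro hsq2
    have hα0 := nzd_of_red J α hJrad hsq2
    refine le_antisymm ?_
      (sup_le (Ideal.span_le.mpr (Set.singleton_subset_iff.mpr hα)) hIJ.le)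
    exact ulrich_fact1 hItop haI hIsq haspan ha0 hIfree hIJ.le hα0 hsq2
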